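/- For every positive integer k and every n that is a positive multiple of k+1, there exists a connected n-vertex graph G that is not a k-clique (and, if k = 2, not a 5-cycle) with ι(G,k) = n/(k+1). -/

import Mathlib

open SimpleGraph

variable {V : Type*}

/-- The closed neighbourhood `N[D]` of a set `D` of vertices of `G`. -/
def closedNbhd (G : SimpleGraph V) (D : Set V) : Set V :=
  {w | ∃ d ∈ D, w = d ∨ G.Adj d w}

/-- `D` is a `k`-clique isolating set of `G` if `G − N[D]` contains no `k`-clique. -/
def IsKCliqueIsolating (G : SimpleGraph V) (k : ℕ) (D : Set V) : Prop :=
  ∀ s : Finset ((closedNbhd G D)ᶜ : Set V), ¬ (G.induce (closedNbhd G D)ᶜ).IsNClique k s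

/-- `ι(G,k)`: the minimum size of a `k`-clique isolating set of `G`. -/
noncomputable def iso (G : SimpleGraph V) (k : ℕ) : ℕ :=
  sInf {m | ∃ D : Set V, IsKCliqueIsolating G k D ∧ D.ncard = m}

namespace Aux11

variable (k m : ℕ)

/-- block index -/
def bl (v : Fin ((k+1)*m)) : ℕ := v.1 / (k+1)
/-- position in block -/
def ps (v : Fin ((k+1)*m)) : ℕ := v.1 % (k+1)

lemma bl_lt (v : Fin ((k+1)*m)) : bl k m v < m := by
  have := v.2
  exact Nat.div_lt_of_lt_mul (by omega)

lemma ps_lt (v : Fin ((k+1)*m)) : ps k m v < k+1 := Nat.mod_lt _ (by omega)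

lemma decomp (v : Fin ((k+1)*m)) : v.1 = bl k m v * (k+1) + ps k m v := by
  exact (Nat.div_add_mod' v.1 (k+1)).symm

/-- vertex (i,j) -/
def mk' (i j : ℕ) (hi : i < m) (hj : j < k+1) : Fin ((k+1)*m) :=
  ⟨i*(k+1)+j, by nlinarith⟩

lemma bl_mk' (i j : ℕ) (hi : i < m) (hj : j < k+1) : bl k m (mk' k m i j hi hj) = i := by
  simp only [bl, mk']
  rw [Nat.add_comm, Nat.add_mul_div_right _ _ (by omega : 0 < k+1), Nat.div_eq_of_lt hj]
  omega

lemma ps_mk' (i j : ℕ) (hi : i < m) (hj : j < k+1) : ps k m (mk' k m i j hi hj) = j := by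
  simp only [ps, mk']
  rw [Nat.add_comm, Nat.add_mul_mod_self_right, Nat.mod_eq_of_lt hj]

/-- The extremal graph. -/
def B : SimpleGraph (Fin ((k+1)*m)) where
  Adj v w := v ≠ w ∧ (bl k m v = bl k m w ∨
    (ps k m v = k ∧ ps k m w = k ∧ (bl k m v + 1 = bl k m w ∨ bl k m w + 1 = bl k m v)))
  symm := by
    constructor
    intro v w ⟨h1, h2⟩
    refine ⟨Ne.symm h1, ?_⟩
    tauto
  loopless := by constructor; intro v h; exact h.1 rfl

end Aux11

namespace Aux11

variable (k m : ℕ)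

lemma ext' {v w : Fin ((k+1)*m)} (h1 : bl k m v = bl k m w) (h2 : ps k m v = ps k m w) :
    v = w := by
  have hv := decomp k m v
  rw [h1, h2] at hv
  exact Fin.ext (hv.trans (decomp k m w).symm)

/-- path vertex of block i -/
def pv (i : ℕ) (hi : i < m) : Fin ((k+1)*m) := mk' k m i k hi (by omega)

lemma bl_pv (i : ℕ) (hi : i < m) : bl k m (pv k m i hi) = i := bl_mk' k m i k hi (by omega)
lemma ps_pv (i : ℕ) (hi : i < m) : ps k m (pv k m i hi) = k := ps_mk' k m i k hi (by omega)

lemma adj_same_block {v w : Fin ((k+1)*m)} (h1 : v ≠ w) (h2 : bl k m v = bl k m w) :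
    (B k m).Adj v w := ⟨h1, Or.inl h2⟩

lemma reach_pv (hm : 0 < m) (v : Fin ((k+1)*m)) :
    (B k m).Reachable v (pv k m (bl k m v) (bl_lt k m v)) := by
  by_cases h : v = pv k m (bl k m v) (bl_lt k m v)
  · exact h ▸ Reachable.refl v
  · exact (adj_same_block k m h (bl_pv k m _ _).symm).reachable

lemma reach_pv_zero (hm : 0 < m) (i : ℕ) (hi : i < m) :
    (B k m).Reachable (pv k m i hi) (pv k m 0 hm) := by
  induction i with
  | zero => rfl
  | succ j ih =>
    have hj : j < m := by omega
    have hadj : (B k m).Adj (pv k m (j+1) hi) (pv k m j hj) := by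
      refine ⟨?_, Or.inr ⟨ps_pv k m _ _, ps_pv k m _ _, Or.inr ?_⟩⟩
      · intro h
        have := congrArg (bl k m) h
        rw [bl_pv, bl_pv] at this; omega
      · rw [bl_pv, bl_pv]
    exact hadj.reachable.trans (ih hj)

lemma B_connected (hm : 0 < m) : (B k m).Connected := by
  have hne : Nonempty (Fin ((k+1)*m)) := ⟨⟨0, by positivity⟩⟩
  refine ⟨fun v w => ?_⟩
  have hv := (reach_pv k m hm v).trans (reach_pv_zero k m hm _ _)
  have hw := (reach_pv k m hm w).trans (reach_pv_zero k m hm _ _)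
  exact hv.trans hw.symm

end Aux11

namespace Aux11

variable (k m : ℕ)

/-- The set of path vertices. -/
def D0 : Set (Fin ((k+1)*m)) := {v | ps k m v = k}

lemma mem_closedNbhd_D0 (w : Fin ((k+1)*m)) : w ∈ closedNbhd (B k m) (D0 k m) := by
  simp only [closedNbhd, Set.mem_setOf_eq]
  by_cases h : ps k m w = k
  · exact ⟨w, h, Or.inl rfl⟩
  · refine ⟨pv k m (bl k m w) (bl_lt k m w), ps_pv k m _ _, Or.inr ?_⟩
    refine ⟨?_, Or.inl (bl_pv k m _ _)⟩
    intro he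
    rw [← he] at h
    exact h (ps_pv k m _ _)

lemma D0_isolating (hk : 0 < k) : IsKCliqueIsolating (B k m) k (D0 k m) := by
  intro s hs
  have hcard := hs.2
  have : s.Nonempty := Finset.card_pos.mp (by omega)
  obtain ⟨x, -⟩ := this
  have hx : (x : Fin ((k+1)*m)) ∉ closedNbhd (B k m) (D0 k m) := x.2
  exact hx (mem_closedNbhd_D0 k m x)

lemma D0_ncard : (D0 k m).ncard = m := by
  have hinj : Function.Injective (fun i : Fin m => pv k m i.1 i.2) := by
    intro a b h
    have := congrArg (bl k m) h
    rw [bl_pv, bl_pv] at this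
    exact Fin.ext this
  have hrange : D0 k m = Set.range (fun i : Fin m => pv k m i.1 i.2) := by
    ext v
    constructor
    · intro hv
      exact ⟨⟨bl k m v, bl_lt k m v⟩, ext' k m (bl_pv k m _ _) ((ps_pv k m _ _).trans hv.symm)⟩
    · rintro ⟨i, rfl⟩
      exact ps_pv k m i.1 i.2
  rw [hrange, ← Set.image_univ, Set.ncard_image_of_injective _ hinj, Set.ncard_univ]
  simp

end Aux11

namespace Aux11

variable (k m : ℕ)

lemma lower_bound (hk : 0 < k) (D : Set (Fin ((k+1)*m)))
    (hD : IsKCliqueIsolating (B k m) k D) : m ≤ D.ncard := by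
  have key : ∀ i : Fin m, ∃ d ∈ D, bl k m d = i.1 := by
    intro i
    by_contra hcon
    push_neg at hcon
    have hmem : ∀ j : Fin k, mk' k m i.1 j.1 i.2 (by omega) ∈ (closedNbhd (B k m) D)ᶜ := by
      intro j hw
      obtain ⟨d, hd, hcase⟩ := hw
      rcases hcase with heq | hadj
      · exact hcon d hd (by rw [← heq, bl_mk'])
      · rcases hadj.2 with hbl | ⟨_, hpsw, _⟩
        · exact hcon d hd (by rw [hbl, bl_mk'])
        · rw [ps_mk'] at hpsw; omega
    set f : Fin k → ((closedNbhd (B k m) D)ᶜ : Set (Fin ((k+1)*m))) :=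
      fun j => ⟨mk' k m i.1 j.1 i.2 (by omega), hmem j⟩ with hf
    have hfinj : Function.Injective f := by
      intro a b h
      have := congrArg (fun x => ps k m x.1) h
      simp only [hf, ps_mk'] at this
      exact Fin.ext this
    refine hD (Finset.univ.map ⟨f, hfinj⟩) ⟨?_, by simp⟩
    intro a ha b hb hab
    simp only [Finset.coe_map, Set.mem_image, Finset.mem_coe, Finset.mem_map] at ha hb
    obtain ⟨ja, -, rfl⟩ := ha
    obtain ⟨jb, -, rfl⟩ := hb
    show (B k m).Adj _ _
    refine adj_same_block k m (fun h => hab (Subtype.ext h)) ?_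
    simp only [hf, Function.Embedding.coeFn_mk, Function.Embedding.coe_subtype, bl_mk']
  choose d hdD hdbl using key
  have hinj : Function.Injective d := by
    intro a b h
    refine Fin.ext ?_
    rw [← hdbl a, ← hdbl b, h]
  have hsub : Set.range d ⊆ D := by rintro _ ⟨i, rfl⟩; exact hdD i
  calc m = (Set.range d).ncard := by
        rw [← Set.image_univ, Set.ncard_image_of_injective _ hinj, Set.ncard_univ]; simp
    _ ≤ D.ncard := Set.ncard_le_ncard hsub (Set.toFinite D)

lemma iso_B (hk : 0 < k) : iso (B k m) k = m := by
  have hmem : m ∈ {c | ∃ D : Set (Fin ((k+1)*m)), IsKCliqueIsolating (B k m) k D ∧ D.ncard = c} :=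
    ⟨D0 k m, D0_isolating k m hk, D0_ncard k m⟩
  refine le_antisymm (Nat.sInf_le hmem) (le_csInf ⟨m, hmem⟩ ?_)
  rintro c ⟨D, hD, rfl⟩
  exact lower_bound k m hk D hD

end Aux11

theorem stmt11 (k n : ℕ) (hk : 0 < k) (hn : 0 < n) (hdvd : (k + 1) ∣ n) :
    ∃ G : SimpleGraph (Fin n), G.Connected ∧
      ¬ Nonempty (G ≃g (⊤ : SimpleGraph (Fin k))) ∧
      (k = 2 → ¬ Nonempty (G ≃g cycleGraph 5)) ∧
      iso G k = n / (k + 1) := by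
  obtain ⟨m, rfl⟩ := hdvd
  have hm : 0 < m := by
    rcases Nat.eq_zero_or_pos m with h | h
    · subst h; simp at hn
    · exact h
  refine ⟨Aux11.B k m, Aux11.B_connected k m hm, ?_, ?_, ?_⟩
  · rintro ⟨e⟩
    have := Fintype.card_congr e.toEquiv
    simp only [Fintype.card_fin] at this
    nlinarith
  · rintro rfl ⟨e⟩
    have := Fintype.card_congr e.toEquiv
    simp only [Fintype.card_fin] at this
    omega
  · rw [Aux11.iso_B k m hk, Nat.mul_div_cancel_left m (by omega : 0 < k + 1)]
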